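/- Let E be a commutative ring and let J be an ideal of T = E[y₁,…,y_m,x₁,…,x_n], viewed also as Q = (E[y₁,…,y_m])[x₁,…,x_n]. Let ≺ be an elimination order with the x variables larger than the y variables (lexicographically refined as in: x^α y^β ≺ x^{α'} y^{β'} iff x^α ≺ x^{α'} or (x^α = x^{α'} and y^β ≺ y^{β'})). If G = {g₁,…,g_t} is a Gröbner basis of J in T with coefficients in E (with respect to ≺), then G is a Gröbner basis of J in Q with coefficients in E[y₁,…,y_m] (with respect to ≺ restricted to x-monomials). -/

import Mathlib

/-- The leading exponent (leading monomial) of `f` w.r.t. the monomial order `m`. -/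
noncomputable def mdeg {σ R : Type*} [CommSemiring R] (m : MonomialOrder σ)
    (f : MvPolynomial σ R) : σ →₀ ℕ :=
  m.toSyn.symm (f.support.sup fun d => m.toSyn d)

/-- The leading coefficient of `f` w.r.t. the monomial order `m`. -/
noncomputable def mlc {σ R : Type*} [CommSemiring R] (m : MonomialOrder σ)
    (f : MvPolynomial σ R) : R :=
  MvPolynomial.coeff (mdeg m f) f

/-- The leading term of `f` w.r.t. the monomial order `m`. -/
noncomputable def mlt {σ R : Type*} [CommSemiring R] (m : MonomialOrder σ)
    (f : MvPolynomial σ R) : MvPolynomial σ R :=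
  MvPolynomial.monomial (mdeg m f) (mlc m f)

open MvPolynomial

section auxmdeg
variable {σ R : Type*} [CommSemiring R] (mm : MonomialOrder σ)

lemma st17_toSyn_mdeg (f : MvPolynomial σ R) :
    mm.toSyn (mdeg mm f) = f.support.sup fun d => mm.toSyn d := by
  simp [mdeg]

lemma st17_mdeg_mem_support {f : MvPolynomial σ R} (hf : f ≠ 0) : mdeg mm f ∈ f.support := by
  obtain ⟨d, hd, he⟩ := Finset.exists_mem_eq_sup f.support
    (Finset.nonempty_iff_ne_empty.mpr (MvPolynomial.support_eq_empty.not.mpr hf)) (fun d => mm.toSyn d)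
  have : mdeg mm f = d := by simp [mdeg, he]
  rwa [this]

lemma st17_le_mdeg {f : MvPolynomial σ R} {γ : σ →₀ ℕ} (h : γ ∈ f.support) :
    mm.toSyn γ ≤ mm.toSyn (mdeg mm f) := by
  rw [st17_toSyn_mdeg]
  exact Finset.le_sup h

end auxmdeg

section bridge
variable {E : Type*} [CommRing E] {n m : ℕ}

local notation "e" => (Finsupp.sumFinsuppEquivProdFinsupp : ((Fin n ⊕ Fin m) →₀ ℕ) ≃ _)
local notation "φ" => MvPolynomial.sumAlgEquiv E (Fin n) (Fin m)

lemma st17_phi_monomial (d : (Fin n ⊕ Fin m) →₀ ℕ) (c : E) :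
    φ (monomial d c) = monomial (e d).1 (monomial (e d).2 c) := by
  induction d using Finsupp.induction with
  | zero =>
      simp only [monomial_zero', sumAlgEquiv_C_inl]
      have : e (0 : (Fin n ⊕ Fin m) →₀ ℕ) = 0 := by ext x <;> simp
      simp [this]
  | single_add s k d hs hk ih =>
      have h1 : (monomial (Finsupp.single s k + d) c : MvPolynomial _ E)
          = monomial (Finsupp.single s k) 1 * monomial d c := by
        rw [monomial_mul, one_mul]
      have he : e (Finsupp.single s k + d) = ((e (Finsupp.single s k)).1 + (e d).1,
          (e (Finsupp.single s k)).2 + (e d).2) := by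
        apply Prod.ext <;> ext x <;>
          simp [Finsupp.fst_sumFinsuppEquivProdFinsupp, Finsupp.snd_sumFinsuppEquivProdFinsupp]
      rw [h1, map_mul, ih, he]
      have h2 : φ (monomial (Finsupp.single s k) 1)
          = monomial (e (Finsupp.single s k)).1 (monomial (e (Finsupp.single s k)).2 1) := by
        rw [← X_pow_eq_monomial]
        cases s with
        | inl i =>
            have : e (Finsupp.single (Sum.inl i : Fin n ⊕ Fin m) k)
                = (Finsupp.single i k, 0) := by
              apply Prod.ext <;> ext x <;>
                simp [Finsupp.fst_sumFinsuppEquivProdFinsupp,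
                  Finsupp.snd_sumFinsuppEquivProdFinsupp, Finsupp.single_apply,
                  Sum.inl.injEq]
            rw [map_pow, this]
            simp only [sumAlgEquiv_X_inl]
            rw [X_pow_eq_monomial]
            simp [monomial_zero']
        | inr j =>
            have : e (Finsupp.single (Sum.inr j : Fin n ⊕ Fin m) k)
                = (0, Finsupp.single j k) := by
              apply Prod.ext <;> ext x <;>
                simp [Finsupp.fst_sumFinsuppEquivProdFinsupp,
                  Finsupp.snd_sumFinsuppEquivProdFinsupp, Finsupp.single_apply]
            rw [map_pow, this]
            simp only [sumAlgEquiv_X_inr]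
            rw [← C_pow, X_pow_eq_monomial]
            rw [C_apply]
      rw [h2, monomial_mul, monomial_mul, one_mul]

lemma st17_coeff_phi (f : MvPolynomial (Fin n ⊕ Fin m) E) (α : Fin n →₀ ℕ) (β : Fin m →₀ ℕ) :
    coeff β (coeff α (φ f)) = coeff ((e).symm (α, β)) f := by
  conv_lhs => rw [f.as_sum]
  rw [map_sum]
  simp only [st17_phi_monomial, coeff_sum, coeff_monomial, apply_ite (coeff β), coeff_zero]
  have : ∀ d ∈ f.support,
      (if (e d).1 = α then if (e d).2 = β then coeff d f else 0 else 0)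
        = if (e).symm (α, β) = d then coeff d f else 0 := by
    intro d _
    by_cases h : (e).symm (α, β) = d
    · have hd : e d = (α, β) := by rw [← h]; exact Equiv.apply_symm_apply _ _
      rw [hd, if_pos h]
      norm_num
    · have : ¬((e d).1 = α ∧ (e d).2 = β) := by
        intro ⟨h1, h2⟩
        apply h
        rw [Equiv.symm_apply_eq]
        exact Prod.ext h1.symm h2.symm
      rw [if_neg h]
      split_ifs with h1 h2
      · exact absurd ⟨h1, h2⟩ this
      · rfl
      · rfl
  rw [Finset.sum_congr rfl this, Finset.sum_ite_eq]
  split_ifs with h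
  · rfl
  · rw [MvPolynomial.notMem_support_iff.mp h]

lemma st17_coeff_phi_eq_zero {f : MvPolynomial (Fin n ⊕ Fin m) E} {α : Fin n →₀ ℕ}
    (h : ∀ γ ∈ f.support, (e γ).1 ≠ α) : coeff α (φ f) = 0 := by
  apply MvPolynomial.ext
  intro β
  rw [st17_coeff_phi, coeff_zero]
  by_contra hne
  exact h _ (MvPolynomial.mem_support_iff.mpr hne)
    (by rw [Equiv.apply_symm_apply])

lemma st17_mdeg_phi (mo : MonomialOrder (Fin n ⊕ Fin m)) (mx : MonomialOrder (Fin n))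
    (hfst : ∀ a b : (Fin n ⊕ Fin m) →₀ ℕ, mo.toSyn a ≤ mo.toSyn b →
      mx.toSyn (e a).1 ≤ mx.toSyn (e b).1)
    {f : MvPolynomial (Fin n ⊕ Fin m) E} (hf : f ≠ 0) :
    mdeg mx (φ f) = (e (mdeg mo f)).1 := by
  have hmem : (e (mdeg mo f)).1 ∈ (φ f).support := by
    rw [MvPolynomial.mem_support_iff]
    intro h0
    have hco := st17_coeff_phi f (e (mdeg mo f)).1 (e (mdeg mo f)).2
    rw [h0] at hco
    simp only [coeff_zero] at hco
    rw [show ((e (mdeg mo f)).1, (e (mdeg mo f)).2) = e (mdeg mo f) from rfl,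
      Equiv.symm_apply_apply] at hco
    exact (MvPolynomial.mem_support_iff.mp (st17_mdeg_mem_support mo hf)) hco.symm
  have hle : ∀ a ∈ (φ f).support, mx.toSyn a ≤ mx.toSyn (e (mdeg mo f)).1 := by
    intro a ha
    rw [MvPolynomial.mem_support_iff] at ha
    obtain ⟨β, hβ⟩ := MvPolynomial.ne_zero_iff.mp ha
    rw [st17_coeff_phi] at hβ
    have hmem' : (e).symm (a, β) ∈ f.support := MvPolynomial.mem_support_iff.mpr hβ
    have := hfst _ _ (st17_le_mdeg mo hmem')
    rwa [Equiv.apply_symm_apply] at this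
  have hsup : ((φ f).support.sup fun d => mx.toSyn d) = mx.toSyn (e (mdeg mo f)).1 :=
    le_antisymm (Finset.sup_le hle) (Finset.le_sup hmem)
  rw [mdeg, hsup, AddEquiv.symm_apply_apply]

lemma st17_e_fst_tsub (u v : (Fin n ⊕ Fin m) →₀ ℕ) :
    (e (u - v)).1 = (e u).1 - (e v).1 := by
  ext x
  simp [Finsupp.fst_sumFinsuppEquivProdFinsupp, Finsupp.tsub_apply]

lemma st17_e_snd_tsub (u v : (Fin n ⊕ Fin m) →₀ ℕ) :
    (e (u - v)).2 = (e u).2 - (e v).2 := by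
  ext x
  simp [Finsupp.snd_sumFinsuppEquivProdFinsupp, Finsupp.tsub_apply]

lemma st17_e_fst_mono {u v : (Fin n ⊕ Fin m) →₀ ℕ} (h : u ≤ v) : (e u).1 ≤ (e v).1 := by
  intro x
  rw [Finsupp.fst_sumFinsuppEquivProdFinsupp, Finsupp.fst_sumFinsuppEquivProdFinsupp]
  exact h _


lemma st17_main (mo : MonomialOrder (Fin n ⊕ Fin m)) (mx : MonomialOrder (Fin n)) {t : ℕ}
    (hfst : ∀ a b : (Fin n ⊕ Fin m) →₀ ℕ, mo.toSyn a ≤ mo.toSyn b →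
      mx.toSyn (e a).1 ≤ mx.toSyn (e b).1)
    (hlt : ∀ a b : (Fin n ⊕ Fin m) →₀ ℕ, mo.toSyn a < mo.toSyn b →
      mx.toSyn (e a).1 < mx.toSyn (e b).1 ∨ (e a).1 = (e b).1)
    (J : Ideal (MvPolynomial (Fin n ⊕ Fin m) E))
    (G : Fin t → MvPolynomial (Fin n ⊕ Fin m) E)
    (hGJ : ∀ i, G i ∈ J) (hG0 : ∀ i, G i ≠ 0)
    (hGB : Ideal.span (mlt mo '' {f | f ∈ J ∧ f ≠ 0}) =
      Ideal.span (mlt mo '' Set.range G)) :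
    ∀ (s : mo.syn) (f : MvPolynomial (Fin n ⊕ Fin m) E),
      mo.toSyn (mdeg mo f) = s → f ∈ J → f ≠ 0 →
      mlt mx (φ f) ∈ Ideal.span (mlt mx '' Set.range fun i => φ (G i)) := by
  classical
  intro s
  induction s using WellFoundedLT.induction with
  | ind s IH =>
  intro f hs hfJ hf0
  -- Step 1: the leading term of f is in the span of the leading terms of G
  have h1 : mlt mo f ∈ Ideal.span (Set.range fun i => mlt mo (G i)) := by
    have hmem : mlt mo f ∈ Ideal.span (mlt mo '' {f | f ∈ J ∧ f ≠ 0}) :=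
      Ideal.subset_span ⟨f, ⟨hfJ, hf0⟩, rfl⟩
    rw [hGB] at hmem
    rwa [show (mlt mo '' Set.range G) = Set.range fun i => mlt mo (G i) by
      rw [← Set.range_comp]; rfl] at hmem
  obtain ⟨q, hq⟩ := Ideal.mem_span_range_iff_exists_fun.mp h1
  set c : Fin t → E := fun i => if mdeg mo (G i) ≤ mdeg mo f
      then coeff (mdeg mo f - mdeg mo (G i)) (q i) else 0 with hcdef
  have hcle : ∀ i, c i ≠ 0 → mdeg mo (G i) ≤ mdeg mo f := by
    intro i hi
    by_contra hh
    exact hi (by rw [hcdef]; simp [hh])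
  -- Step 2: the leading coefficient identity
  have hlcsum : mlc mo f = ∑ i, c i * mlc mo (G i) := by
    have h2 := congrArg (MvPolynomial.coeff (mdeg mo f)) hq
    rw [MvPolynomial.coeff_sum] at h2
    have h3 : (coeff (mdeg mo f) (mlt mo f)) = mlc mo f := by
      rw [mlt, coeff_monomial, if_pos rfl]
    rw [h3] at h2
    rw [← h2]
    apply Finset.sum_congr rfl
    intro i _
    rw [mlt, coeff_mul_monomial']
    by_cases hi : mdeg mo (G i) ≤ mdeg mo f
    · rw [if_pos hi, hcdef]; simp [hi]
    · rw [if_neg hi, hcdef]; simp [hi]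
  -- Step 3: the correction polynomial p and remainder f'
  set p := ∑ i : Fin t, (monomial (mdeg mo f - mdeg mo (G i)) (c i)) * G i with hpdef
  have hpJ : p ∈ J := Ideal.sum_mem _ fun i _ => J.mul_mem_left _ (hGJ i)
  set f' := f - p with hf'def
  have hf'J : f' ∈ J := J.sub_mem hfJ hpJ
  -- Step 4: support bounds
  have hterm_le : ∀ i, ∀ γ ∈ ((monomial (mdeg mo f - mdeg mo (G i)) (c i)) * G i).support,
      mo.toSyn γ ≤ mo.toSyn (mdeg mo f) := by
    intro i γ hγ
    by_cases hci : c i = 0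
    · rw [hci, map_zero, zero_mul] at hγ; simp at hγ
    · have hlei := hcle i hci
      rw [MvPolynomial.mem_support_iff, coeff_monomial_mul'] at hγ
      by_cases hsle : mdeg mo f - mdeg mo (G i) ≤ γ
      · rw [if_pos hsle] at hγ
        have h5 : coeff (γ - (mdeg mo f - mdeg mo (G i))) (G i) ≠ 0 := right_ne_zero_of_mul hγ
        have h6 := st17_le_mdeg mo (MvPolynomial.mem_support_iff.mpr h5)
        have h7 : γ = (mdeg mo f - mdeg mo (G i)) + (γ - (mdeg mo f - mdeg mo (G i))) :=
          (add_tsub_cancel_of_le hsle).symm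
        calc mo.toSyn γ = mo.toSyn (mdeg mo f - mdeg mo (G i))
              + mo.toSyn (γ - (mdeg mo f - mdeg mo (G i))) := by rw [← map_add, ← h7]
          _ ≤ mo.toSyn (mdeg mo f - mdeg mo (G i)) + mo.toSyn (mdeg mo (G i)) :=
              add_le_add_right h6 _
          _ = mo.toSyn (mdeg mo f) := by rw [← map_add, tsub_add_cancel_of_le hlei]
      · rw [if_neg hsle] at hγ; exact absurd rfl hγ
  have hterm_coeff : ∀ i, coeff (mdeg mo f) ((monomial (mdeg mo f - mdeg mo (G i)) (c i)) * G i)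
      = c i * mlc mo (G i) := by
    intro i
    by_cases hci : c i = 0
    · rw [hci, map_zero, zero_mul, coeff_zero, zero_mul]
    · have hlei := hcle i hci
      rw [coeff_monomial_mul', if_pos tsub_le_self, tsub_tsub_cancel_of_le hlei, mlc]
  have hf'_coeff : coeff (mdeg mo f) f' = 0 := by
    rw [hf'def, MvPolynomial.coeff_sub, hpdef, MvPolynomial.coeff_sum,
      Finset.sum_congr rfl fun i _ => hterm_coeff i,
      show (coeff (mdeg mo f) f) = ∑ i, c i * mlc mo (G i) from hlcsum]
    exact sub_self _
  have hf'_supp : ∀ γ ∈ f'.support, mo.toSyn γ < mo.toSyn (mdeg mo f) := by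
    intro γ hγ
    have hne : γ ≠ mdeg mo f := by
      intro hEq; rw [MvPolynomial.mem_support_iff, hEq, hf'_coeff] at hγ; exact hγ rfl
    have hle2 : mo.toSyn γ ≤ mo.toSyn (mdeg mo f) := by
      rw [MvPolynomial.mem_support_iff, hf'def, MvPolynomial.coeff_sub] at hγ
      by_cases hcf : coeff γ f = 0
      · have hcp : coeff γ p ≠ 0 := by intro hcp; rw [hcf, hcp] at hγ; simp at hγ
        rw [hpdef, MvPolynomial.coeff_sum] at hcp
        obtain ⟨i, _, hi⟩ := Finset.exists_ne_zero_of_sum_ne_zero hcp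
        exact hterm_le i γ (MvPolynomial.mem_support_iff.mpr hi)
      · exact st17_le_mdeg mo (MvPolynomial.mem_support_iff.mpr hcf)
    exact lt_of_le_of_ne hle2 (fun hEq => hne (mo.toSyn.injective hEq))
  -- Step 5: decomposition in Q
  have hmltf : mlt mx (φ f) = monomial (e (mdeg mo f)).1 (coeff (e (mdeg mo f)).1 (φ f)) := by
    rw [mlt, mlc, st17_mdeg_phi mo mx hfst hf0]
  have hsplit : coeff (e (mdeg mo f)).1 (φ f) = coeff (e (mdeg mo f)).1 (φ f')
      + ∑ i, coeff (e (mdeg mo f)).1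
          (φ ((monomial (mdeg mo f - mdeg mo (G i)) (c i)) * G i)) := by
    rw [hf'def, map_sub, MvPolynomial.coeff_sub, hpdef, map_sum, MvPolynomial.coeff_sum]
    ring
  -- Step 6: each term lands in the span
  have hterm_Q : ∀ i, monomial (e (mdeg mo f)).1
      (coeff (e (mdeg mo f)).1 (φ ((monomial (mdeg mo f - mdeg mo (G i)) (c i)) * G i)))
      ∈ Ideal.span (mlt mx '' Set.range fun i => φ (G i)) := by
    intro i
    by_cases hci : c i = 0
    · rw [hci, map_zero, zero_mul, map_zero, coeff_zero, map_zero]; exact Ideal.zero_mem _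
    · have hlei := hcle i hci
      have hφt : φ ((monomial (mdeg mo f - mdeg mo (G i)) (c i)) * G i)
          = monomial (e (mdeg mo f - mdeg mo (G i))).1
              (monomial (e (mdeg mo f - mdeg mo (G i))).2 (c i)) * φ (G i) := by
        rw [map_mul, st17_phi_monomial]
      have hαle : (e (mdeg mo (G i))).1 ≤ (e (mdeg mo f)).1 := st17_e_fst_mono hlei
      rw [hφt, coeff_monomial_mul', st17_e_fst_tsub, if_pos tsub_le_self,
        tsub_tsub_cancel_of_le hαle]
      have hmltGi : mlt mx (φ (G i)) = monomial (e (mdeg mo (G i))).1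
          (coeff (e (mdeg mo (G i))).1 (φ (G i))) := by
        rw [mlt, mlc, st17_mdeg_phi mo mx hfst (hG0 i)]
      rw [show (monomial ((e (mdeg mo f)).1))
          ((monomial (e (mdeg mo f - mdeg mo (G i))).2 (c i))
            * coeff (e (mdeg mo (G i))).1 (φ (G i)))
          = (monomial ((e (mdeg mo f)).1 - (e (mdeg mo (G i))).1)
              (monomial (e (mdeg mo f - mdeg mo (G i))).2 (c i))) * mlt mx (φ (G i)) from by
        rw [hmltGi, monomial_mul, tsub_add_cancel_of_le hαle]]
      exact Ideal.mul_mem_left _ _ (Ideal.subset_span ⟨_, ⟨i, rfl⟩, rfl⟩)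
  -- Step 7: the remainder part
  have hrem : monomial (e (mdeg mo f)).1 (coeff (e (mdeg mo f)).1 (φ f'))
      ∈ Ideal.span (mlt mx '' Set.range fun i => φ (G i)) := by
    by_cases hf'0 : f' = 0
    · rw [hf'0, map_zero, coeff_zero, map_zero]; exact Ideal.zero_mem _
    · have hlt' : mo.toSyn (mdeg mo f') < mo.toSyn (mdeg mo f) :=
        hf'_supp _ (st17_mdeg_mem_support mo hf'0)
      by_cases hα : (e (mdeg mo f')).1 = (e (mdeg mo f)).1
      · have heq : monomial (e (mdeg mo f)).1 (coeff (e (mdeg mo f)).1 (φ f'))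
            = mlt mx (φ f') := by
          rw [mlt, mlc, st17_mdeg_phi mo mx hfst hf'0, hα]
        rw [heq]
        exact IH (mo.toSyn (mdeg mo f')) (hs ▸ hlt') f' rfl hf'J hf'0
      · have hz : coeff (e (mdeg mo f)).1 (φ f') = 0 := by
          apply st17_coeff_phi_eq_zero
          intro γ hγ
          have h8 := hfst _ _ (st17_le_mdeg mo hγ)
          have h9 : mx.toSyn (e (mdeg mo f')).1 < mx.toSyn (e (mdeg mo f)).1 := by
            rcases hlt _ _ hlt' with h | h
            · exact h
            · exact absurd h hα
          intro hEq
          rw [hEq] at h8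
          exact absurd (lt_of_le_of_lt h8 h9) (lt_irrefl _)
        rw [hz, map_zero]
        exact Ideal.zero_mem _
  -- assemble
  rw [hmltf, hsplit, map_add, map_sum]
  exact Ideal.add_mem _ hrem (Ideal.sum_mem _ fun i _ => hterm_Q i)

end bridge

theorem stmt17 {E : Type*} [CommRing E] {n m t : ℕ}
    (mo : MonomialOrder (Fin n ⊕ Fin m))
    (mx : MonomialOrder (Fin n)) (my : MonomialOrder (Fin m))
    (horder : ∀ a b : (Fin n ⊕ Fin m) →₀ ℕ,
      mo.toSyn a < mo.toSyn b ↔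
        (mx.toSyn (Finsupp.sumFinsuppEquivProdFinsupp a).1 <
            mx.toSyn (Finsupp.sumFinsuppEquivProdFinsupp b).1 ∨
          ((Finsupp.sumFinsuppEquivProdFinsupp a).1 =
              (Finsupp.sumFinsuppEquivProdFinsupp b).1 ∧
            my.toSyn (Finsupp.sumFinsuppEquivProdFinsupp a).2 <
              my.toSyn (Finsupp.sumFinsuppEquivProdFinsupp b).2)))
    (J : Ideal (MvPolynomial (Fin n ⊕ Fin m) E))
    (G : Fin t → MvPolynomial (Fin n ⊕ Fin m) E)
    (hGJ : ∀ i, G i ∈ J) (hG0 : ∀ i, G i ≠ 0)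
    (hGB : Ideal.span (mlt mo '' {f | f ∈ J ∧ f ≠ 0}) =
      Ideal.span (mlt mo '' Set.range G)) :
    Ideal.span (mlt mx ''
        {g | g ∈ Ideal.map (MvPolynomial.sumAlgEquiv E (Fin n) (Fin m)) J ∧ g ≠ 0}) =
      Ideal.span (mlt mx ''
        Set.range fun i => MvPolynomial.sumAlgEquiv E (Fin n) (Fin m) (G i)) := by
  classical
  have hfst : ∀ a b : (Fin n ⊕ Fin m) →₀ ℕ, mo.toSyn a ≤ mo.toSyn b →
      mx.toSyn (Finsupp.sumFinsuppEquivProdFinsupp a).1 ≤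
        mx.toSyn (Finsupp.sumFinsuppEquivProdFinsupp b).1 := by
    intro a b hab
    rcases lt_or_eq_of_le hab with hl | hl
    · rcases (horder a b).mp hl with h' | ⟨h', _⟩
      · exact le_of_lt h'
      · exact le_of_eq (congrArg _ h')
    · rw [mo.toSyn.injective hl]
  have hlt : ∀ a b : (Fin n ⊕ Fin m) →₀ ℕ, mo.toSyn a < mo.toSyn b →
      mx.toSyn (Finsupp.sumFinsuppEquivProdFinsupp a).1 <
          mx.toSyn (Finsupp.sumFinsuppEquivProdFinsupp b).1 ∨
        (Finsupp.sumFinsuppEquivProdFinsupp a).1 =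
          (Finsupp.sumFinsuppEquivProdFinsupp b).1 := by
    intro a b hab
    rcases (horder a b).mp hab with h' | ⟨h', _⟩
    · exact Or.inl h'
    · exact Or.inr h'
  have main := st17_main mo mx hfst hlt J G hGJ hG0 hGB
  apply le_antisymm
  · rw [Ideal.span_le]
    rintro _ ⟨g, ⟨hgJ, hg0⟩, rfl⟩
    obtain ⟨f, hfJ, rfl⟩ := (Ideal.mem_map_iff_of_surjective _
      (AlgEquiv.surjective (MvPolynomial.sumAlgEquiv E (Fin n) (Fin m)))).mp hgJ
    have hf0 : f ≠ 0 := fun h0 => hg0 (by rw [h0, map_zero])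
    exact main _ f rfl hfJ hf0
  · apply Ideal.span_mono
    rintro _ ⟨_, ⟨i, rfl⟩, rfl⟩
    exact ⟨MvPolynomial.sumAlgEquiv E (Fin n) (Fin m) (G i),
      ⟨Ideal.mem_map_of_mem _ (hGJ i),
        fun h0 => hG0 i ((MvPolynomial.sumAlgEquiv E (Fin n) (Fin m)).injective
          (by rw [h0, map_zero]))⟩, rfl⟩
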